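/- ∑_{n≥1} 1 / (n · 2^n · binom(3n, n)) = π/10 − (log 2)/5. -/

import Mathlib

open MeasureTheory intervalIntegral Real
open scoped ENNReal NNReal


lemma beta_nat (b : ℕ) : ∀ a : ℕ, ∫ x in (0:ℝ)..1, x ^ a * (1 - x) ^ b
    = (a.factorial * b.factorial : ℝ) / (a + b + 1).factorial := by
  induction b with
  | zero =>
    intro a
    have h : (a.factorial : ℝ) ≠ 0 := by positivity
    simp [integral_pow, Nat.factorial_succ]
    field_simp
  | succ b ih =>
    intro a
    have key : ∀ x : ℝ, x ^ a * (1 - x) ^ (b + 1)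
        = x ^ a * (1 - x) ^ b - x ^ (a + 1) * (1 - x) ^ b := by
      intro x; ring
    simp_rw [key]
    rw [intervalIntegral.integral_sub, ih a, ih (a + 1)]
    · have h1 : ((a + b + 1).factorial : ℝ) ≠ 0 := by positivity
      have e1 : (a + 1 + b + 1) = (a + b + 1) + 1 := by omega
      have e2 : (a + (b + 1) + 1) = (a + b + 1) + 1 := by omega
      rw [e1, e2, Nat.factorial_succ (a + b + 1), Nat.factorial_succ a,
        Nat.factorial_succ b]
      push_cast
      field_simp
      ring
    · exact (Continuous.intervalIntegrable (by continuity) _ _)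
    · exact (Continuous.intervalIntegrable (by continuity) _ _)

lemma term_eq (n : ℕ) :
    (1 : ℝ) / ((n + 1) * 2 ^ (n + 1) * (Nat.choose (3 * (n + 1)) (n + 1)))
      = ∫ x in (0:ℝ)..1, ((1 - x) ^ 2 / 2) * (x * (1 - x) ^ 2 / 2) ^ n := by
  have key : ∀ x : ℝ, ((1 - x) ^ 2 / 2) * (x * (1 - x) ^ 2 / 2) ^ n
      = (2 ^ (n + 1) : ℝ)⁻¹ * (x ^ n * (1 - x) ^ (2 * n + 2)) := by
    intro x
    rw [div_pow, mul_pow, ← pow_mul]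
    field_simp
    ring
  simp_rw [key]
  rw [intervalIntegral.integral_const_mul, beta_nat (2 * n + 2) n]
  have e : n + (2 * n + 2) + 1 = 3 * (n + 1) := by omega
  rw [e]
  have hc := Nat.choose_mul_factorial_mul_factorial
    (show n + 1 ≤ 3 * (n + 1) by omega)
  rw [show 3 * (n + 1) - (n + 1) = 2 * n + 2 by omega] at hc
  have hC : (0 : ℝ) < (Nat.choose (3 * (n + 1)) (n + 1) : ℝ) := by
    exact_mod_cast Nat.choose_pos (show n + 1 ≤ 3 * (n + 1) by omega)
  have h1 : ((3 * (n + 1)).factorial : ℝ)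
      = (Nat.choose (3 * (n + 1)) (n + 1) : ℝ) * (n + 1).factorial * (2 * n + 2).factorial := by
    exact_mod_cast hc.symm
  have h2 : ((n + 1).factorial : ℝ) = (n + 1) * n.factorial := by
    exact_mod_cast Nat.factorial_succ n
  have hn : (0 : ℝ) < (n : ℝ) + 1 := by positivity
  have hf : (0 : ℝ) < (n.factorial : ℝ) := by positivity
  have hf2 : (0 : ℝ) < ((2 * n + 2).factorial : ℝ) := by positivity
  rw [h1, h2]
  field_simp

lemma int_eval : ∫ x in (0:ℝ)..1, (1 - x) ^ 2 / ((2 - x) * (x ^ 2 + 1))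
    = Real.pi / 10 - Real.log 2 / 5 := by
  have h := intervalIntegral.integral_eq_sub_of_hasDerivAt
    (f := fun x : ℝ => (-(1/5)) * Real.log (2 - x) + (-(2/5)) * Real.log (x ^ 2 + 1)
      + (2/5) * Real.arctan x)
    (f' := fun x : ℝ => (1 - x) ^ 2 / ((2 - x) * (x ^ 2 + 1)))
    (a := 0) (b := 1) ?_ ?_
  · rw [h]
    simp [Real.log_one, Real.arctan_one, Real.arctan_zero]
    norm_num [Real.log_one]
    ring
  · intro x hx
    rw [Set.uIcc_of_le (by norm_num : (0:ℝ) ≤ 1)] at hx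
    have h2x : (2 : ℝ) - x ≠ 0 := by
      have := hx.2; nlinarith
    have hx2 : (x : ℝ) ^ 2 + 1 ≠ 0 := by positivity
    have H := (((((hasDerivAt_id x).const_sub 2).log h2x).const_mul (-(1/5) : ℝ)).add
        ((((hasDerivAt_pow 2 x).add_const 1).log hx2).const_mul (-(2/5) : ℝ))).add
      ((Real.hasDerivAt_arctan x).const_mul ((2/5) : ℝ))
    convert H using 1
    · funext y; simp only [Pi.add_apply, id]
    · simp only [id]; norm_num; field_simp; ring
  · apply ContinuousOn.intervalIntegrable
    apply ContinuousOn.div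
    · fun_prop
    · fun_prop
    · intro x hx
      rw [Set.uIcc_of_le (by norm_num : (0:ℝ) ≤ 1)] at hx
      have := hx.2
      have h1 : (0:ℝ) < 2 - x := by nlinarith
      positivity

theorem stmt_17 :
    ∑' n : ℕ,
        (1 : ℝ) / ((n + 1) * 2 ^ (n + 1) * (Nat.choose (3 * (n + 1)) (n + 1))) =
      Real.pi / 10 - Real.log 2 / 5 := by
  set f : ℕ → ℝ → ℝ := fun n x => ((1 - x) ^ 2 / 2) * (x * (1 - x) ^ 2 / 2) ^ n with hf
  have hmeas : ∀ n, AEStronglyMeasurable (f n) (volume.restrict (Set.Ioc (0:ℝ) 1)) := by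
    intro n
    exact (Continuous.aestronglyMeasurable (by fun_prop))
  have hbound : ∀ n, ∀ x ∈ Set.Ioc (0:ℝ) 1, ‖f n x‖ ≤ (2⁻¹ : ℝ) ^ n := by
    intro n x hx
    have hx0 : 0 < x := hx.1
    have hx1 : x ≤ 1 := hx.2
    have h1 : (0:ℝ) ≤ 1 - x := by linarith
    have h2 : (1 - x) ^ 2 ≤ 1 := by nlinarith
    have hr0 : (0:ℝ) ≤ x * (1 - x) ^ 2 / 2 := by positivity
    have hr1 : x * (1 - x) ^ 2 / 2 ≤ 2⁻¹ := by nlinarith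
    have hc : (0:ℝ) ≤ (1 - x) ^ 2 / 2 := by positivity
    have hc1 : (1 - x) ^ 2 / 2 ≤ 1 := by nlinarith
    rw [hf]
    simp only [Real.norm_eq_abs]
    rw [abs_of_nonneg (by positivity)]
    calc ((1 - x) ^ 2 / 2) * (x * (1 - x) ^ 2 / 2) ^ n
        ≤ 1 * (2⁻¹ : ℝ) ^ n := by
          apply mul_le_mul hc1 (pow_le_pow_left₀ hr0 hr1 n) (by positivity) (by norm_num)
      _ = (2⁻¹ : ℝ) ^ n := one_mul _
  have hlin : ∀ n, ∫⁻ x, ‖f n x‖₊ ∂(volume.restrict (Set.Ioc (0:ℝ) 1))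
      ≤ (2⁻¹ : ℝ≥0∞) ^ n := by
    intro n
    have : ∫⁻ x, ‖f n x‖₊ ∂(volume.restrict (Set.Ioc (0:ℝ) 1))
        ≤ ∫⁻ _, (2⁻¹ : ℝ≥0∞) ^ n ∂(volume.restrict (Set.Ioc (0:ℝ) 1)) := by
      apply lintegral_mono_ae
      rw [ae_restrict_iff' measurableSet_Ioc]
      filter_upwards with x hx
      have h := hbound n x hx
      calc (‖f n x‖₊ : ℝ≥0∞) = ENNReal.ofReal ‖f n x‖ := (ofReal_norm_eq_enorm _).symm
        _ ≤ ENNReal.ofReal ((2⁻¹ : ℝ) ^ n) := ENNReal.ofReal_le_ofReal h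
        _ = (2⁻¹ : ℝ≥0∞) ^ n := by
            rw [ENNReal.ofReal_pow (by norm_num)]
            congr 1
            rw [show ((2:ℝ)⁻¹) = 1/2 by norm_num] at *
            rw [ENNReal.ofReal_div_of_pos (by norm_num)]
            simp [ENNReal.ofReal_one]
    refine this.trans ?_
    rw [lintegral_const, Measure.restrict_apply_univ, Real.volume_Ioc]
    norm_num
  have hsum : ∑' n, ∫⁻ x, ‖f n x‖₊ ∂(volume.restrict (Set.Ioc (0:ℝ) 1)) ≠ ⊤ := by
    refine ne_top_of_le_ne_top ?_ (ENNReal.tsum_le_tsum hlin)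
    rw [ENNReal.tsum_geometric]
    simp [ENNReal.one_sub_inv_two]
  have key := MeasureTheory.integral_tsum hmeas hsum
  calc ∑' n : ℕ, (1 : ℝ) / ((n + 1) * 2 ^ (n + 1) * (Nat.choose (3 * (n + 1)) (n + 1)))
      = ∑' n : ℕ, ∫ x in Set.Ioc (0:ℝ) 1, f n x := by
        congr 1; funext n
        rw [term_eq n, intervalIntegral.integral_of_le (by norm_num : (0:ℝ) ≤ 1)]
    _ = ∫ x in Set.Ioc (0:ℝ) 1, ∑' n, f n x := key.symm
    _ = ∫ x in Set.Ioc (0:ℝ) 1, (1 - x) ^ 2 / ((2 - x) * (x ^ 2 + 1)) := by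
        apply setIntegral_congr_fun measurableSet_Ioc
        intro x hx
        have hx0 : 0 < x := hx.1
        have hx1 : x ≤ 1 := hx.2
        have h1 : (0:ℝ) ≤ 1 - x := by linarith
        have hr0 : (0:ℝ) ≤ x * (1 - x) ^ 2 / 2 := by positivity
        have hr1 : x * (1 - x) ^ 2 / 2 < 1 := by nlinarith
        have hden : (2 - x) * (x ^ 2 + 1) ≠ 0 := by
          have : (0:ℝ) < 2 - x := by linarith
          positivity
        rw [hf]
        simp only
        rw [tsum_mul_left, tsum_geometric_of_lt_one hr0 hr1]
        have h1r : 1 - x * (1 - x) ^ 2 / 2 ≠ 0 := by nlinarith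
        have e : (1 - x * (1 - x) ^ 2 / 2) = (2 - x) * (x ^ 2 + 1) / 2 := by ring
        rw [e]
        field_simp [hden]
    _ = ∫ x in (0:ℝ)..1, (1 - x) ^ 2 / ((2 - x) * (x ^ 2 + 1)) :=
        (intervalIntegral.integral_of_le (by norm_num : (0:ℝ) ≤ 1)).symm
    _ = Real.pi / 10 - Real.log 2 / 5 := int_eval
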